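/- Let X be a nonempty compact topological space and T : X → X a minimal homeomorphism (every orbit {Tⁿx : n ∈ ℤ} is dense in X), and let p ≥ 2 be an integer. If there exists a continuous function F : X → ℂ, not identically zero, with F(Tx) = e^{2πi/p}·F(x) for all x ∈ X, then there exist continuous functions f, g : X → ℤ with p·f − 1 = g − g∘T⁻¹. -/

import Mathlib

open Complex

/-- The full (two-sided) orbit of `x` under the homeomorphism `T`. -/
def homeoOrbit {X : Type*} [TopologicalSpace X] (T : X ≃ₜ X) (x : X) : Set X :=
  Set.range fun n : ℤ => (T.toEquiv ^ n) x

/-- A homeomorphism is minimal if every orbit is dense. -/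
def IsMinimalHomeo {X : Type*} [TopologicalSpace X] (T : X ≃ₜ X) : Prop :=
  ∀ x : X, Dense (homeoOrbit T x)

/-- A continuous map with finite range into a T1 space is locally constant. -/
lemma isLocallyConstant_of_finite_range {X Y : Type*} [TopologicalSpace X]
    [TopologicalSpace Y] [T1Space Y] {f : X → Y} (hf : Continuous f)
    (hfin : (Set.range f).Finite) : IsLocallyConstant f := by
  rw [IsLocallyConstant.iff_isOpen_fiber]
  intro y
  have hclosed : IsClosed (f ⁻¹' (Set.range f \ {y})) := by
    apply IsClosed.preimage hf
    exact ((hfin.subset Set.diff_subset).isClosed)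
  have : f ⁻¹' {y} = (f ⁻¹' (Set.range f \ {y}))ᶜ := by
    ext x
    simp only [Set.mem_preimage, Set.mem_singleton_iff, Set.mem_compl_iff, Set.mem_diff,
      Set.mem_range]
    constructor
    · intro h hh; exact hh.2 h
    · intro h; by_contra hne; exact h ⟨⟨x, rfl⟩, hne⟩
  rw [this]
  exact hclosed.isOpen_compl

theorem coboundary_of_eigenvalue
    (X : Type*) [TopologicalSpace X] [CompactSpace X] [Nonempty X]
    (T : X ≃ₜ X) (hT : IsMinimalHomeo T)
    (p : ℤ) (hp : 2 ≤ p)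
    (F : C(X, ℂ)) (hF : F ≠ 0)
    (heig : ∀ x : X, F (T x) = Complex.exp (2 * Real.pi * Complex.I / p) * F x) :
    ∃ f g : C(X, ℤ), p • f - 1 = g - g.comp (T.symm : C(X, X)) := by
  classical
  set N : ℕ := p.toNat with hNdef
  have hN2 : 2 ≤ N := by omega
  have hNp : (N : ℤ) = p := by omega
  have hNne : N ≠ 0 := by omega
  haveI : NeZero N := ⟨hNne⟩
  set ζ : ℂ := Complex.exp (2 * Real.pi * Complex.I / N) with hζdef
  have hζ : IsPrimitiveRoot ζ N := Complex.isPrimitiveRoot_exp N hNne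
  have hcast : ((N : ℤ) : ℂ) = (N : ℂ) := by push_cast; ring
  have heig' : ∀ x : X, F (T x) = ζ * F x := by
    intro x
    rw [heig x, hζdef, ← hNp]
    norm_num
  have hζne : ζ ≠ 0 := hζ.ne_zero hNne
  -- orbit formula
  have hsymm : ∀ x : X, F (T.symm x) = ζ⁻¹ * F x := by
    intro x
    have := heig' (T.symm x)
    rw [T.apply_symm_apply] at this
    rw [this]
    field_simp
  have horb : ∀ (n : ℤ) (x : X), F ((T.toEquiv ^ n) x) = ζ ^ n * F x := by
    intro n
    induction n using Int.induction_on with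
    | zero => intro x; simp
    | succ n ih =>
        intro x
        have h1 : (T.toEquiv ^ ((n : ℤ) + 1)) x = (T.toEquiv ^ (n : ℤ)) (T x) := by
          rw [zpow_add_one]
          rfl
        rw [h1, ih, heig', zpow_add_one₀ hζne]
        ring
    | pred n ih =>
        intro x
        have h1 : (T.toEquiv ^ (-(n : ℤ) - 1)) x = (T.toEquiv ^ (-(n : ℤ))) (T.symm x) := by
          rw [zpow_sub_one]
          rfl
        rw [h1, ih, hsymm, zpow_sub_one₀ hζne]
        ring
  -- F is nowhere zero
  obtain ⟨x₀, hx₀⟩ : ∃ x, F x ≠ 0 := by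
    by_contra h
    push_neg at h
    exact hF (ContinuousMap.ext fun x => h x)
  have hnz : ∀ x, F x ≠ 0 := by
    intro x hx
    have hsub : homeoOrbit T x ⊆ (F ⁻¹' {0}) := by
      rintro _ ⟨n, rfl⟩
      simp only [Set.mem_preimage, Set.mem_singleton_iff]
      rw [horb n x, hx, mul_zero]
    have hdense : Dense (F ⁻¹' {0} : Set X) := (hT x).mono hsub
    have hclosed : IsClosed (F ⁻¹' {0} : Set X) := IsClosed.preimage F.continuous isClosed_singleton
    have : (F ⁻¹' {0} : Set X) = Set.univ := hclosed.closure_eq ▸ hdense.closure_eq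
    exact hx₀ (by have := Set.eq_univ_iff_forall.mp this x₀; simpa using this)
  -- F^N is constant
  have hζN : ζ ^ N = 1 := hζ.pow_eq_one
  have hpowconst : ∀ x, F x ^ N = F x₀ ^ N := by
    intro x
    have hsub : homeoOrbit T x₀ ⊆ {y | F y ^ N = F x₀ ^ N} := by
      rintro _ ⟨n, rfl⟩
      simp only [Set.mem_setOf_eq]
      rw [horb n x₀, mul_pow, ← zpow_natCast (ζ ^ n), ← zpow_mul, mul_comm n (N : ℤ),
        zpow_mul, zpow_natCast, hζN, one_zpow, one_mul]
    have hdense : Dense {y | F y ^ N = F x₀ ^ N} := (hT x₀).mono hsub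
    have hclosed : IsClosed {y | F y ^ N = F x₀ ^ N} := by
      have : {y | F y ^ N = F x₀ ^ N} = (fun y => F y ^ N - F x₀ ^ N) ⁻¹' {0} := by
        ext y; simp [sub_eq_zero]
      rw [this]
      exact IsClosed.preimage (by continuity) isClosed_singleton
    have huniv : {y | F y ^ N = F x₀ ^ N} = Set.univ := hclosed.closure_eq ▸ hdense.closure_eq
    exact Set.eq_univ_iff_forall.mp huniv x
  -- the ratio is an N-th root of unity, so exists i < N with ζ^i = (F x / F x₀)⁻¹
  have hexists : ∀ x : X, ∃ i < N, ζ ^ i = (F x / F x₀)⁻¹ := by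
    intro x
    apply hζ.eq_pow_of_pow_eq_one
    rw [inv_pow, div_pow, hpowconst x, div_self (pow_ne_zero _ (hnz x₀)), inv_one]
  -- define G : ℂ → ℤ and g
  set G : ℂ → ℤ := fun z =>
    if h : ∃ i < N, ζ ^ i = (z / F x₀)⁻¹ then (h.choose : ℤ) else 0 with hGdef
  set g0 : X → ℤ := fun x => G (F x) with hg0def
  have hgspec : ∀ x, ζ ^ (g0 x) = (F x / F x₀)⁻¹ ∧ g0 x < N ∧ 0 ≤ g0 x := by
    intro x
    have h := hexists x
    simp only [hg0def, hGdef, dif_pos h]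
    refine ⟨?_, ?_, Int.ofNat_nonneg _⟩
    · rw [zpow_natCast]; exact h.choose_spec.2
    · exact_mod_cast h.choose_spec.1
  -- continuity of g0
  have hrange : (Set.range (F : X → ℂ)).Finite := by
    have : Set.range (F : X → ℂ) ⊆ (fun i : Fin N => F x₀ * (ζ ^ (i : ℕ))⁻¹) '' Set.univ := by
      rintro _ ⟨x, rfl⟩
      obtain ⟨hpow, hlt, hnn⟩ := hgspec x
      have hlt' : (g0 x).toNat < N := by omega
      refine ⟨⟨(g0 x).toNat, hlt'⟩, Set.mem_univ _, ?_⟩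
      simp only
      have : ζ ^ ((g0 x).toNat : ℤ) = (F x / F x₀)⁻¹ := by
        rw [Int.toNat_of_nonneg hnn]; exact hpow
      rw [zpow_natCast] at this
      rw [this, inv_inv, mul_div_assoc', mul_comm (F x₀) (F x), mul_div_assoc,
        div_self (hnz x₀), mul_one]
    exact Set.Finite.subset (Set.toFinite _) this
  have hg0cont : Continuous g0 := by
    have hlc : IsLocallyConstant (F : X → ℂ) :=
      isLocallyConstant_of_finite_range F.continuous hrange
    exact (hlc.comp G).continuous
  -- cocycle relation mod N
  have hcoc : ∀ x : X, (N : ℤ) ∣ 1 + g0 x - g0 (T.symm x) := by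
    intro x
    have h1 := (hgspec x).1
    have h2 := (hgspec (T.symm x)).1
    have hFx : F x = ζ * F (T.symm x) := by
      have := heig' (T.symm x)
      rwa [T.apply_symm_apply] at this
    rw [← hζ.zpow_eq_one_iff_dvd]
    have hFne := hnz (T.symm x)
    have key : ζ ^ (1 + g0 x - g0 (T.symm x)) =
        ζ ^ (1 : ℤ) * ζ ^ (g0 x) * (ζ ^ (g0 (T.symm x)))⁻¹ := by
      rw [zpow_sub₀ hζne, zpow_add₀ hζne, div_eq_mul_inv]
    rw [key, h1, h2, hFx]
    have hFx0 := hnz x₀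
    field_simp
  -- define f and g as bundled continuous maps
  set gC : C(X, ℤ) := ⟨g0, hg0cont⟩ with hgCdef
  set f0 : X → ℤ := fun x => (1 + g0 x - g0 (T.symm x)) / p with hf0def
  have hf0cont : Continuous f0 := by
    have h1 : Continuous (fun x => 1 + g0 x - g0 (T.symm x)) :=
      Continuous.sub (Continuous.add continuous_const hg0cont)
        (hg0cont.comp T.symm.continuous)
    exact (continuous_of_discreteTopology (f := fun n : ℤ => n / p)).comp h1
  refine ⟨⟨f0, hf0cont⟩, gC, ?_⟩
  ext x
  simp only [ContinuousMap.sub_apply, ContinuousMap.smul_apply, ContinuousMap.one_apply,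
    ContinuousMap.comp_apply, ContinuousMap.coe_mk, ContinuousMap.coe_coe, hgCdef]
  have hdvd : p ∣ 1 + g0 x - g0 (T.symm x) := hNp ▸ hcoc x
  have : p * f0 x = 1 + g0 x - g0 (T.symm x) := Int.mul_ediv_cancel' hdvd
  have hgoal : p • f0 x - 1 = g0 x - g0 (T.symm x) := by
    rw [smul_eq_mul, this]; ring
  exact hgoal
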